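/- Suppose a formal power series h(t) = Σ a_n t^n with nonnegative integer coefficients satisfies h(t) = 1/p(t) for a polynomial p(t) ∈ ℤ[t] with p(0) = 1, and suppose p has a complex root that is not a root of unity. Then the partial sums Σ_{i=0}^n a_i are not bounded by any polynomial in n. -/

import Mathlib

open Polynomial Finset
open scoped IntermediateField

private lemma norm_int_complex (m : ℤ) : ‖((m : ℤ) : ℂ)‖ = |(m : ℝ)| := by
  rw [show ((m : ℤ) : ℂ) = (((m : ℤ) : ℝ) : ℂ) by push_cast; ring, Complex.norm_real,
    Real.norm_eq_abs]

private lemma one_le_multiset_prod (s : Multiset ℝ) (h : ∀ x ∈ s, (1:ℝ) ≤ x) :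
    1 ≤ s.prod := by
  induction s using Multiset.induction with
  | empty => simp
  | cons a s ih =>
    rw [Multiset.prod_cons]
    have ha := h a (Multiset.mem_cons_self a s)
    have hs := ih (fun x hx => h x (Multiset.mem_cons_of_mem hx))
    nlinarith

private lemma norm_multiset_prod' (s : Multiset ℂ) : ‖s.prod‖ = (s.map fun r => ‖r‖).prod := by
  induction s using Multiset.induction with
  | empty => simp
  | cons a s ih => simp [norm_mul, ih]

/-- If the coefficients of the inverse power series are bounded, then `p` has no complex
root in the open unit disk. -/
private lemma aux_no_small_root (p : Polynomial ℤ) (a : ℕ → ℤ)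
    (ha : PowerSeries.mk a * (p : PowerSeries ℤ) = 1)
    (hnn : ∀ n, 0 ≤ a n) {c : ℝ} (hb : ∀ n, (a n : ℝ) ≤ c)
    {w : ℂ} (hw : ‖w‖ < 1) : (p.map (Int.castRingHom ℂ)).eval w ≠ 0 := by
  intro h0
  set f : ℕ → ℂ := fun n => ((a n : ℤ) : ℂ) * w ^ n with hf
  set g : ℕ → ℂ := fun n => ((p.coeff n : ℤ) : ℂ) * w ^ n with hg
  have hfs : Summable fun n => ‖f n‖ := by
    refine Summable.of_nonneg_of_le (fun n => norm_nonneg _) (fun n => ?_)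
      ((summable_geometric_of_lt_one (norm_nonneg w) hw).mul_left c)
    rw [hf]
    simp only [norm_mul, norm_pow]
    have h1 : ‖((a n : ℤ) : ℂ)‖ = (a n : ℝ) := by
      rw [norm_int_complex]
      exact abs_of_nonneg (by exact_mod_cast hnn n)
    rw [h1]
    have h2 : (0:ℝ) ≤ ‖w‖ ^ n := by positivity
    exact mul_le_mul_of_nonneg_right (hb n) h2
  have hg0 : ∀ n ∉ Finset.range (p.natDegree + 1), g n = 0 := by
    intro n hn
    rw [Finset.mem_range, not_lt] at hn
    have : p.coeff n = 0 := p.coeff_eq_zero_of_natDegree_lt (by omega)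
    simp [hg, this]
  have hgs : Summable fun n => ‖g n‖ := by
    apply summable_of_ne_finset_zero (s := Finset.range (p.natDegree + 1))
    intro n hn
    rw [hg0 n hn, norm_zero]
  have htg : ∑' n, g n = (p.map (Int.castRingHom ℂ)).eval w := by
    rw [tsum_eq_sum hg0,
      Polynomial.eval_eq_sum_range' (lt_of_le_of_lt natDegree_map_le (Nat.lt_succ_self _))]
    refine Finset.sum_congr rfl fun i _ => ?_
    simp [hg, Polynomial.coeff_map]
  have key := tsum_mul_tsum_eq_tsum_sum_antidiagonal_of_summable_norm (f := f) (g := g) hfs hgs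
  have hinner : ∀ n, (∑ kl ∈ Finset.HasAntidiagonal.antidiagonal n, f kl.1 * g kl.2)
      = if n = 0 then (1:ℂ) else 0 := by
    intro n
    have step : ∀ kl ∈ Finset.HasAntidiagonal.antidiagonal n,
        f kl.1 * g kl.2 = ((a kl.1 * p.coeff kl.2 : ℤ) : ℂ) * w ^ n := by
      intro kl hkl
      rw [Finset.HasAntidiagonal.mem_antidiagonal] at hkl
      rw [hf, hg, ← hkl, pow_add]
      push_cast
      ring
    rw [Finset.sum_congr rfl step, ← Finset.sum_mul, ← Int.cast_sum]
    have hcoeff : (∑ kl ∈ Finset.HasAntidiagonal.antidiagonal n, a kl.1 * p.coeff kl.2)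
        = (PowerSeries.coeff n) (1 : PowerSeries ℤ) := by
      rw [← ha, PowerSeries.coeff_mul]
      refine Finset.sum_congr rfl fun kl _ => ?_
      simp [PowerSeries.coeff_mk, Polynomial.coeff_coe]
    rw [hcoeff, PowerSeries.coeff_one]
    split
    · rename_i h; subst h; simp
    · simp
  have hsum1 : (∑' n, ∑ kl ∈ Finset.HasAntidiagonal.antidiagonal n, f kl.1 * g kl.2) = 1 := by
    rw [tsum_congr hinner]
    exact tsum_ite_eq 0 (fun _ => (1:ℂ))
  rw [hsum1, htg, h0, mul_zero] at key
  exact zero_ne_one key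

/-- If `p(0)=1` and `p` has no complex root with norm `< 1`, then every complex root of `p`
has norm exactly `1`, and the leading coefficient of `p` is `±1`. -/
private lemma aux_roots_norm_one (p : Polynomial ℤ) (hp0 : p.coeff 0 = 1)
    (hge : ∀ w : ℂ, (p.map (Int.castRingHom ℂ)).eval w = 0 → 1 ≤ ‖w‖) :
    (∀ w : ℂ, (p.map (Int.castRingHom ℂ)).eval w = 0 → ‖w‖ = 1) ∧
      (p.leadingCoeff = 1 ∨ p.leadingCoeff = -1) := by
  set P : Polynomial ℂ := p.map (Int.castRingHom ℂ) with hP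
  have hpne : p ≠ 0 := fun h => by simp [h] at hp0
  have hplne : p.leadingCoeff ≠ 0 := fun h => hpne (Polynomial.leadingCoeff_eq_zero.mp h)
  have hP0 : P.coeff 0 = 1 := by simp [hP, Polynomial.coeff_map, hp0]
  have hPne : P ≠ 0 := fun h => by simp [h] at hP0
  have hlead : P.leadingCoeff = ((p.leadingCoeff : ℤ) : ℂ) :=
    Polynomial.leadingCoeff_map_of_leadingCoeff_ne_zero _ (by
      simp only [eq_intCast, Int.cast_ne_zero]; exact hplne)
  have heq := Polynomial.Splits.eq_prod_roots (IsAlgClosed.splits P)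
  have h1 : P.eval 0 = 1 := by rw [← Polynomial.coeff_zero_eq_eval_zero, hP0]
  have h2 : (1 : ℂ) = P.leadingCoeff * (P.roots.map fun r => -r).prod := by
    conv_lhs => rw [← h1, heq]
    rw [Polynomial.eval_mul, Polynomial.eval_C, Polynomial.eval_multiset_prod,
      Multiset.map_map]
    congr 1
    refine congrArg Multiset.prod (Multiset.map_congr rfl fun r _ => ?_)
    simp
  have h3 : (1 : ℝ) = ‖P.leadingCoeff‖ * (P.roots.map fun r => ‖r‖).prod := by
    have h4 := congrArg (fun x : ℂ => ‖x‖) h2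
    simp only [norm_one, norm_mul] at h4
    rw [h4]
    congr 1
    rw [norm_multiset_prod', Multiset.map_map]
    refine congrArg Multiset.prod (Multiset.map_congr rfl fun r _ => ?_)
    simp
  have hroot_ge : ∀ x ∈ P.roots.map fun r => ‖r‖, (1:ℝ) ≤ x := by
    intro x hx
    rw [Multiset.mem_map] at hx
    obtain ⟨r, hr, rfl⟩ := hx
    exact hge r (Polynomial.isRoot_of_mem_roots hr)
  have hprod_ge : (1:ℝ) ≤ (P.roots.map fun r => ‖r‖).prod :=
    one_le_multiset_prod _ hroot_ge
  have hlead_ge : (1:ℝ) ≤ ‖P.leadingCoeff‖ := by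
    rw [hlead, norm_int_complex]
    exact_mod_cast Int.one_le_abs hplne
  have hprod_le : (P.roots.map fun r => ‖r‖).prod ≤ 1 := by
    nlinarith [hprod_ge, hlead_ge]
  have hprod_eq : (P.roots.map fun r => ‖r‖).prod = 1 := le_antisymm hprod_le hprod_ge
  have hlead_eq : ‖P.leadingCoeff‖ = 1 := by
    rw [hprod_eq, mul_one] at h3; linarith
  constructor
  · intro w hw
    have hwmem : w ∈ P.roots := (Polynomial.mem_roots hPne).mpr hw
    have hmem : ‖w‖ ∈ P.roots.map fun r => ‖r‖ := Multiset.mem_map_of_mem _ hwmem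
    obtain ⟨T, hT⟩ := Multiset.exists_cons_of_mem hmem
    have hTge : (1:ℝ) ≤ T.prod := by
      refine one_le_multiset_prod _ fun x hx => hroot_ge x ?_
      rw [hT]; exact Multiset.mem_cons_of_mem hx
    rw [hT, Multiset.prod_cons] at hprod_eq
    have hwge := hge w hw
    nlinarith
  · have habs : |p.leadingCoeff| = 1 := by
      rw [hlead, norm_int_complex] at hlead_eq
      exact_mod_cast hlead_eq
    rcases (abs_eq (by norm_num : (0:ℤ) ≤ 1)).mp habs with h | h
    · exact Or.inl h
    · exact Or.inr h

/-- If `h(t) = Σ a_n t^n = 1/p(t)` has nonnegative integer coefficients, `p ∈ ℤ[t]`,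
`p(0) = 1`, and `p` has a complex root that is not a root of unity, then the partial sums
`Σ_{i=0}^n a_i` are not bounded by any polynomial in `n`. -/
theorem partial_sums_not_poly_bounded (p : Polynomial ℤ) (hp0 : p.coeff 0 = 1)
    (a : ℕ → ℤ) (ha : PowerSeries.mk a * (p : PowerSeries ℤ) = 1)
    (hnn : ∀ n, 0 ≤ a n)
    (hbad : ∃ z : ℂ, Polynomial.aeval z p = 0 ∧ ∀ k : ℕ, 0 < k → z ^ k ≠ 1) :
    ∀ (c : ℝ) (k : ℕ), ¬ ∀ n : ℕ,
      (∑ i ∈ Finset.range (n + 1), (a i : ℝ)) ≤ c * (n : ℝ) ^ k := by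
  intro c k H
  obtain ⟨z, hz, hzn⟩ := hbad
  -- a 0 = 1
  have ha0 : a 0 = 1 := by
    have h := congrArg (PowerSeries.constantCoeff (R := ℤ)) ha
    simp only [map_mul, map_one, PowerSeries.constantCoeff_mk] at h
    rwa [Polynomial.constantCoeff_coe, hp0, mul_one] at h
  -- if k ≥ 1 we get an immediate contradiction at n = 0
  rcases Nat.eq_zero_or_pos k with hk | hk
  swap
  · have h0 := H 0
    rw [Finset.range_one, Finset.sum_singleton, ha0, Nat.cast_zero, zero_pow hk.ne',
      mul_zero] at h0
    norm_num at h0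
  subst hk
  -- now all coefficients are bounded by c
  have hb : ∀ n, (a n : ℝ) ≤ c := by
    intro n
    have h1 : ((a n : ℤ) : ℝ) ≤ ∑ i ∈ Finset.range (n + 1), ((a i : ℤ) : ℝ) :=
      Finset.single_le_sum (f := fun i => ((a i : ℤ) : ℝ))
        (fun i _ => by show (0:ℝ) ≤ ((a i : ℤ) : ℝ); exact_mod_cast hnn i) (Finset.self_mem_range_succ n)
    have h2 := H n
    simp only [pow_zero, mul_one] at h2
    linarith
  -- no root of p in the open unit disk
  have hge : ∀ w : ℂ, (p.map (Int.castRingHom ℂ)).eval w = 0 → 1 ≤ ‖w‖ := by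
    intro w hw
    by_contra hlt
    exact aux_no_small_root p a ha hnn hb (not_le.mp hlt) hw
  obtain ⟨hnorm1, hleadpm⟩ := aux_roots_norm_one p hp0 hge
  -- a monic integer polynomial with root z
  set q : Polynomial ℤ := if p.leadingCoeff = 1 then p else -p with hq
  have hqmonic : q.Monic := by
    rcases hleadpm with h | h
    · simp [hq, h, Polynomial.Monic, h]
    · have hne : ¬ p.leadingCoeff = 1 := by rw [h]; decide
      simp [hq, hne, Polynomial.Monic, Polynomial.leadingCoeff_neg, h]
  have hqz : Polynomial.aeval z q = 0 := by
    rcases eq_or_ne p.leadingCoeff 1 with h | h <;> simp [hq, h, hz]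
  -- z is integral over ℤ, hence over ℚ
  have hzint : IsIntegral ℤ z := ⟨q, hqmonic, by rwa [← Polynomial.aeval_def]⟩
  have hzintQ : IsIntegral ℚ z := hzint.tower_top
  -- set up the number field ℚ(z)
  haveI : FiniteDimensional ℚ ℚ⟮z⟯ := IntermediateField.adjoin.finiteDimensional hzintQ
  haveI : NumberField ℚ⟮z⟯ := ⟨⟩
  set x : ℚ⟮z⟯ := IntermediateField.AdjoinSimple.gen ℚ z with hx
  have hax : algebraMap ℚ⟮z⟯ ℂ x = z := IntermediateField.AdjoinSimple.algebraMap_gen ℚ z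
  have hxint : IsIntegral ℤ x := by
    have hinj : Function.Injective (IsScalarTower.toAlgHom ℤ ℚ⟮z⟯ ℂ) := by
      rw [show ((IsScalarTower.toAlgHom ℤ ℚ⟮z⟯ ℂ : ℚ⟮z⟯ → ℂ)) = (algebraMap ℚ⟮z⟯ ℂ) from rfl]
      exact (algebraMap ℚ⟮z⟯ ℂ).injective
    rw [← isIntegral_algHom_iff (IsScalarTower.toAlgHom ℤ ℚ⟮z⟯ ℂ) hinj]
    have : (IsScalarTower.toAlgHom ℤ ℚ⟮z⟯ ℂ) x = z := hax
    rwa [this]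
  have haevx : Polynomial.aeval x p = 0 := by
    apply (algebraMap ℚ⟮z⟯ ℂ).injective
    rw [map_zero]
    show (IsScalarTower.toAlgHom ℤ ℚ⟮z⟯ ℂ) (Polynomial.aeval x p) = 0
    rw [← Polynomial.aeval_algHom_apply, show (IsScalarTower.toAlgHom ℤ ℚ⟮z⟯ ℂ) x = z from hax]
    exact hz
  have hconj : ∀ φ : ℚ⟮z⟯ →+* ℂ, ‖φ x‖ = 1 := by
    intro φ
    apply hnorm1
    have h7 : Polynomial.aeval (φ x) p = 0 := by
      have h8 := Polynomial.aeval_algHom_apply φ.toIntAlgHom x p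
      rw [haevx, map_zero] at h8
      exact h8
    rw [Polynomial.eval_map, ← algebraMap_int_eq, ← Polynomial.aeval_def]
    exact h7
  obtain ⟨n, hn, hxn⟩ := NumberField.Embeddings.pow_eq_one_of_norm_eq_one ℚ⟮z⟯ ℂ hxint hconj
  apply hzn n hn
  rw [← hax, ← map_pow, hxn, map_one]
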